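/- Let (S, P) be an acyclic finite DTMC, C ⊆ S an avoid set and B ⊆ S a target set. If a function p : S → ℝ satisfies the SMT-encoding constraints for constrained reachability — namely p s = 1 for every s ∈ B, p s = 0 for every s ∉ B from which B is not C-avoidingly reachable, and p s = ∑_{s' ∈ S} P s s' · p s' for every s ∉ B from which B is C-avoidingly reachable — then p s = PUntil s for every s ∈ S. In particular, the SMT encoding of the until probability has a unique solution on acyclic DTMCs, equal to the constrained reachability probability. -/
import Mathlib


open scoped Classical

/-- n-step constrained reachability values for the until property ¬C U B. -/
noncomputable def untilN {S : Type*} [Fintype S] (P : S → S → ℝ) (C B : Set S) :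
    ℕ → S → ℝ
  | 0, s => if s ∈ B then 1 else 0
  | n + 1, s =>
      if s ∈ B then 1 else if s ∈ C then 0 else ∑ s' : S, P s s' * untilN P C B n s'

/-- `B` is C-avoidingly reachable from `s`. -/
def AvoidReach {S : Type*} (P : S → S → ℝ) (C B : Set S) (s : S) : Prop :=
  ∃ t ∈ B, Relation.ReflTransGen (fun a b => 0 < P a b ∧ a ∉ C) s t

section aux

open Filter Topology

variable {S : Type*} [Fintype S] (P : S → S → ℝ) (C B : Set S)

lemma untilN_nonneg (hP : ∀ s s' : S, 0 ≤ P s s') :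
    ∀ n (s : S), 0 ≤ untilN P C B n s := by
  intro n
  induction n with
  | zero => intro s; simp only [untilN]; split <;> norm_num
  | succ n ih =>
    intro s
    simp only [untilN]
    split
    · norm_num
    · split
      · norm_num
      · exact Finset.sum_nonneg fun s' _ => mul_nonneg (hP s s') (ih s')

lemma untilN_le_one (hP : ∀ s s' : S, 0 ≤ P s s')
    (hsum : ∀ s : S, ∑ s' : S, P s s' = 1) :
    ∀ n (s : S), untilN P C B n s ≤ 1 := by
  intro n
  induction n with
  | zero => intro s; simp only [untilN]; split <;> norm_num
  | succ n ih =>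
    intro s
    simp only [untilN]
    split
    · norm_num
    · split
      · norm_num
      · calc ∑ s' : S, P s s' * untilN P C B n s' ≤ ∑ s' : S, P s s' * 1 :=
              Finset.sum_le_sum fun s' _ =>
                mul_le_mul_of_nonneg_left (ih s') (hP s s')
          _ = 1 := by simp [hsum s]

lemma untilN_mono (hP : ∀ s s' : S, 0 ≤ P s s') (s : S) :
    Monotone fun n => untilN P C B n s := by
  have key : ∀ n (s : S), untilN P C B n s ≤ untilN P C B (n + 1) s := by
    intro n
    induction n with
    | zero =>
      intro s
      by_cases hB : s ∈ B
      · simp [untilN, hB]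
      · simp only [untilN, if_neg hB]
        split
        · norm_num
        · exact Finset.sum_nonneg fun s' _ => mul_nonneg (hP s s')
            (untilN_nonneg P C B hP 0 s')
    | succ n ih =>
      intro s
      simp only [untilN]
      split
      · exact le_refl 1
      · split
        · exact le_refl 0
        · exact Finset.sum_le_sum fun s' _ =>
            mul_le_mul_of_nonneg_left (ih s') (hP s s')
  exact monotone_nat_of_le_succ fun n => key n s

lemma untilN_eq_zero_of_not_reach (hP : ∀ s s' : S, 0 ≤ P s s') :
    ∀ n (s : S), s ∉ B → ¬ AvoidReach P C B s → untilN P C B n s = 0 := by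
  intro n
  induction n with
  | zero => intro s hB _; simp [untilN, hB]
  | succ n ih =>
    intro s hB hR
    simp only [untilN, if_neg hB]
    split
    · rfl
    · rename_i hC
      apply Finset.sum_eq_zero
      intro s' _
      rcases eq_or_lt_of_le (hP s s') with h | h
      · rw [← h, zero_mul]
      · have hB' : s' ∉ B := fun hb =>
          hR ⟨s', hb, Relation.ReflTransGen.single ⟨h, hC⟩⟩
        have hR' : ¬ AvoidReach P C B s' := fun ⟨t, ht, hrt⟩ =>
          hR ⟨t, ht, Relation.ReflTransGen.head ⟨h, hC⟩ hrt⟩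
        rw [ih s' hB' hR', mul_zero]

end aux

/-- Let (S, P) be an acyclic finite DTMC, C ⊆ S an avoid set and
B ⊆ S a target set. If a function p : S → ℝ satisfies the SMT-encoding constraints
for constrained reachability — p s = 1 on B, p s = 0 on states outside B from which
B is not C-avoidingly reachable, and p s = ∑ s', P s s' * p s' on states outside B
from which B is C-avoidingly reachable — then p equals the constrained reachability
probability `PUntil = ⨆ₙ until n` everywhere. -/
theorem smt_until_unique_on_acyclic {S : Type*} [Fintype S] [Nonempty S]
    (P : S → S → ℝ)
    (hP : ∀ s s' : S, 0 ≤ P s s')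
    (hsum : ∀ s : S, ∑ s' : S, P s s' = 1)
    (habs : ∀ s : S, P s s = 1 ∨ P s s = 0)
    (hwf : WellFounded (fun s' s : S => 0 < P s s' ∧ s' ≠ s))
    (C B : Set S) (p : S → ℝ)
    (h1 : ∀ s ∈ B, p s = 1)
    (h0 : ∀ s : S, s ∉ B → ¬ AvoidReach P C B s → p s = 0)
    (hrec : ∀ s : S, s ∉ B → AvoidReach P C B s → p s = ∑ s' : S, P s s' * p s') :
    ∀ s : S, p s = ⨆ n : ℕ, untilN P C B n s := by
  open Filter Topology in
  set L : S → ℝ := fun s => ⨆ n : ℕ, untilN P C B n s with hL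
  have hbdd : ∀ s : S, BddAbove (Set.range fun n => untilN P C B n s) := by
    intro s
    exact ⟨1, by rintro _ ⟨n, rfl⟩; exact untilN_le_one P C B hP hsum n s⟩
  have hten : ∀ s : S, Filter.Tendsto (fun n => untilN P C B n s)
      Filter.atTop (nhds (L s)) := fun s =>
    tendsto_atTop_ciSup (untilN_mono P C B hP s) (hbdd s)
  intro s
  induction s using WellFounded.induction hwf with
  | _ s IH =>
  by_cases hB : s ∈ B
  · have : ∀ n, untilN P C B n s = 1 := by
      intro n; cases n <;> simp [untilN, hB]
    rw [h1 s hB]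
    simp only [this]
    exact (ciSup_const).symm
  by_cases hR : AvoidReach P C B s
  · -- s ∉ B, reachable
    obtain ⟨t, htB, hrt⟩ := hR
    have hC : s ∉ C := by
      rcases (Relation.ReflTransGen.cases_head hrt) with rfl | ⟨c, ⟨_, hc⟩, _⟩
      · exact absurd htB hB
      · exact hc
    have hPss : P s s = 0 := by
      rcases habs s with h | h
      · exfalso
        have hzero : ∀ x : S, x ≠ s → P s x = 0 := by
          have hsum' : ∑ x ∈ Finset.univ.erase s, P s x = 0 := by
            have := hsum s
            rw [← Finset.add_sum_erase _ _ (Finset.mem_univ s), h] at this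
            linarith
          intro x hx
          have := Finset.sum_eq_zero_iff_of_nonneg
            (fun y _ => hP s y) |>.mp hsum' x (by simp [hx])
          exact this
        have hts : t = s := by
          clear hC htB
          induction hrt with
          | refl => rfl
          | tail _ hstep ih =>
            rename_i c t' hct
            subst ih
            by_contra hne
            exact absurd (hzero t' hne) (ne_of_gt hstep.1)
        exact hB (hts ▸ htB)
      · exact h
    have hpsum : p s = ∑ s' : S, P s s' * L s' := by
      rw [hrec s hB ⟨t, htB, hrt⟩]
      apply Finset.sum_congr rfl
      intro s' _
      rcases eq_or_lt_of_le (hP s s') with h | h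
      · rw [← h, zero_mul, zero_mul]
      · have hne : s' ≠ s := fun he => by rw [he, hPss] at h; exact lt_irrefl _ h
        rw [IH s' ⟨h, hne⟩]
    have hlim1 : Filter.Tendsto (fun n => untilN P C B (n + 1) s)
        Filter.atTop (nhds (∑ s' : S, P s s' * L s')) := by
      have heq : (fun n => untilN P C B (n + 1) s)
          = fun n => ∑ s' : S, P s s' * untilN P C B n s' := by
        funext n; simp [untilN, hB, hC]
      rw [heq]
      exact tendsto_finset_sum _ fun s' _ => (hten s').const_mul _
    have hlim2 : Filter.Tendsto (fun n => untilN P C B (n + 1) s)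
        Filter.atTop (nhds (L s)) :=
      (hten s).comp (Filter.tendsto_add_atTop_nat 1)
    rw [hpsum]
    exact tendsto_nhds_unique hlim1 hlim2
  · -- s ∉ B, not reachable
    rw [h0 s hB hR]
    have : ∀ n, untilN P C B n s = 0 := fun n =>
      untilN_eq_zero_of_not_reach P C B hP n s hB hR
    simp only [this]
    exact (ciSup_const).symm
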